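/- If G is a vertical geodesic of S² × ℝ and G' is a slant geodesic of S² × ℝ, then the intersection G ∩ G' is either empty or infinite. -/

import Mathlib

open scoped RealInnerProductSpace

/-- Euclidean 3-space. -/
abbrev E3 : Type := EuclideanSpace ℝ (Fin 3)

/-- The unit sphere `S² ⊆ ℝ³`. -/
abbrev S2 : Type := Metric.sphere (0 : E3) 1

/-- A geodesic of `S² × ℝ`: a set of the form
`{(cos(α t) • u + sin(α t) • v, β t + c) | t ∈ ℝ}` where `u, v ∈ S²` are orthogonal,
`c ∈ ℝ`, and `(α, β) ≠ (0, 0)`. -/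
def IsSphGeodesic (G : Set (S2 × ℝ)) : Prop :=
  ∃ (u v : S2) (α β c : ℝ), ⟪(u : E3), (v : E3)⟫ = 0 ∧ (α, β) ≠ ((0 : ℝ), (0 : ℝ)) ∧
    G = {q : S2 × ℝ | ∃ t : ℝ,
      (q.1 : E3) = Real.cos (α * t) • (u : E3) + Real.sin (α * t) • (v : E3) ∧
      q.2 = β * t + c}

/-- A geodesic of `S² × ℝ` is horizontal if it is contained in `S² × {r}` for some `r`. -/
def IsHorizontalSphGeodesic (G : Set (S2 × ℝ)) : Prop :=
  IsSphGeodesic G ∧ ∃ r : ℝ, G ⊆ {q : S2 × ℝ | q.2 = r}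

/-- A geodesic of `S² × ℝ` is vertical if it equals `{p} × ℝ` for some `p ∈ S²`. -/
def IsVerticalSphGeodesic (G : Set (S2 × ℝ)) : Prop :=
  IsSphGeodesic G ∧ ∃ p : S2, G = {q : S2 × ℝ | q.1 = p}

/-- A geodesic of `S² × ℝ` is slant if it is neither horizontal nor vertical. -/
def IsSlantSphGeodesic (G : Set (S2 × ℝ)) : Prop :=
  IsSphGeodesic G ∧ ¬ IsHorizontalSphGeodesic G ∧ ¬ IsVerticalSphGeodesic G

/-- A vertical geodesic and a slant geodesic of `S² × ℝ` intersect either not at all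
or infinitely often. -/
theorem sphere_times_real_vertical_slant_intersection
    (G G' : Set (S2 × ℝ))
    (hG : IsVerticalSphGeodesic G) (hG' : IsSlantSphGeodesic G') :
    G ∩ G' = ∅ ∨ (G ∩ G').Infinite := by
  obtain ⟨-, p, rfl⟩ := hG
  obtain ⟨⟨u, v, α, β, c, huv, hαβ, rfl⟩, hH, hV⟩ := hG'
  have hβ : β ≠ 0 := by
    rintro rfl
    refine hH ⟨⟨u, v, α, 0, c, huv, hαβ, rfl⟩, c, ?_⟩
    rintro q ⟨t, -, ht2⟩
    simpa using ht2
  have hα : α ≠ 0 := by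
    rintro rfl
    refine hV ⟨⟨u, v, 0, β, c, huv, hαβ, rfl⟩, u, ?_⟩
    ext q
    simp only [Set.mem_setOf_eq]
    constructor
    · rintro ⟨t, h1, -⟩
      apply Subtype.ext
      simpa using h1
    · intro h
      refine ⟨(q.2 - c) / β, by simp [h], by field_simp; ring⟩
  have hπ : (0:ℝ) < Real.pi := Real.pi_pos
  rcases Set.eq_empty_or_nonempty
      ({q : S2 × ℝ | q.1 = p} ∩ {q : S2 × ℝ | ∃ t : ℝ,
        (q.1 : E3) = Real.cos (α * t) • (u : E3) + Real.sin (α * t) • (v : E3) ∧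
        q.2 = β * t + c}) with he | hne
  · exact Or.inl he
  · right
    obtain ⟨q, hq1, t₀, hq2, hq3⟩ := hne
    refine Set.infinite_of_injective_forall_mem
      (f := fun n : ℕ => ((p, β * (t₀ + 2 * Real.pi * n / α) + c) : S2 × ℝ)) ?_ ?_
    · intro m n h
      simp only [Prod.mk.injEq, true_and] at h
      have h1 : t₀ + 2 * Real.pi * m / α = t₀ + 2 * Real.pi * n / α :=
        mul_left_cancel₀ hβ (by linarith)
      have key : 2 * Real.pi / α ≠ 0 := div_ne_zero (by positivity) hα
      have h2 : (m : ℝ) = n := mul_left_cancel₀ key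
        (by rw [div_mul_eq_mul_div, div_mul_eq_mul_div]; linarith)
      exact_mod_cast h2
    · intro n
      refine ⟨rfl, t₀ + 2 * Real.pi * n / α, ?_, rfl⟩
      have hq1' : (q.1 : E3) = (p : E3) := by rw [hq1]
      have harg : α * (t₀ + 2 * Real.pi * n / α) = α * t₀ + n * (2 * Real.pi) := by
        field_simp
      rw [harg, Real.cos_add_nat_mul_two_pi, Real.sin_add_nat_mul_two_pi]
      rw [← hq1', hq2]
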